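/- arXiv:2303.07347 — 3 statements merged into one kernel-verified Lean document; each statement's English description precedes it below -/
import Mathlib

section
/- Let E be a real inner product space and let a, b ∈ E be linearly independent (so a + t•b ≠ 0 for every real t). Fix y ∈ ℝ. Then the angle x ↦ ∠(a + x•b, a + y•b) is strictly decreasing for x ≤ y and strictly increasing for x ≥ y; that is, for all x₁ < x₂ ≤ y one has ∠(a + x₂•b, a + y•b) < ∠(a + x₁•b, a + y•b), and for all y ≤ x₁ < x₂ one has ∠(a + x₁•b, a + y•b) < ∠(a + x₂•b, a + y•b). -/
open InnerProductGeometry Real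

local notation "⟪" x ", " y "⟫" => @inner ℝ _ _ x y

theorem angle_strictMono_on_line {E : Type*} [NormedAddCommGroup E] [InnerProductSpace ℝ E]
    {a b : E} (h : LinearIndependent ℝ ![a, b]) (y : ℝ) :
    (∀ x₁ x₂ : ℝ, x₁ < x₂ → x₂ ≤ y →
      angle (a + x₂ • b) (a + y • b) < angle (a + x₁ • b) (a + y • b)) ∧
    (∀ x₁ x₂ : ℝ, y ≤ x₁ → x₁ < x₂ →
      angle (a + x₁ • b) (a + y • b) < angle (a + x₂ • b) (a + y • b)) := by
  have hpair := LinearIndependent.pair_iff.mp h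
  have hb : b ≠ 0 := by
    intro hb0
    simpa using (hpair 0 1 (by simp [hb0])).2
  have hne : ∀ t : ℝ, a + t • b ≠ 0 := by
    intro t ht
    have := (hpair 1 t (by simpa using ht)).1
    norm_num at this
  set u : E := a + y • b with hu
  have hu0 : u ≠ 0 := hne y
  have hnu : (0:ℝ) < ‖u‖ := norm_pos_iff.mpr hu0
  set f : ℝ → ℝ := fun x => ⟪a + x • b, u⟫ / (‖a + x • b‖ * ‖u‖) with hf
  -- strict Cauchy-Schwarz gap
  have gap : ∀ x : ℝ, ⟪a + x • b, b⟫ ^ 2 < ‖a + x • b‖ ^ 2 * ‖b‖ ^ 2 := by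
    intro x
    set v := a + x • b with hv
    have hkey : ∀ c : ℝ, c ≠ 0 → ‖b‖ • (c • v) ≠ ‖c • v‖ • b := by
      intro c hc0 hc
      have h0 : (c * ‖b‖) • a + (c * ‖b‖ * x - ‖c • v‖) • b = 0 := by
        have heq : (c * ‖b‖) • a + (c * ‖b‖ * x - ‖c • v‖) • b
            = ‖b‖ • (c • v) - ‖c • v‖ • b := by
          rw [hv]; module
        rw [heq, hc, sub_self]
      have h1 := (hpair _ _ h0).1
      have hbn : ‖b‖ ≠ 0 := norm_ne_zero_iff.mpr hb
      exact (mul_ne_zero hc0 hbn) h1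
    have h1 : ⟪v, b⟫ < ‖v‖ * ‖b‖ := by
      refine inner_lt_norm_mul_iff_real.mpr ?_
      simpa using hkey 1 one_ne_zero
    have h2 : ⟪-v, b⟫ < ‖-v‖ * ‖b‖ := by
      refine inner_lt_norm_mul_iff_real.mpr ?_
      have := hkey (-1) (by norm_num)
      simpa [neg_smul, one_smul] using this
    rw [inner_neg_left, norm_neg] at h2
    nlinarith [h1, h2]
  -- derivative of f
  have hderiv : ∀ x : ℝ, HasDerivAt f
      ((‖u‖ / ‖a + x • b‖ * ((y - x) * (‖b‖ ^ 2 * ‖a + x • b‖ ^ 2 - ⟪a + x • b, b⟫ ^ 2)))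
        / (‖a + x • b‖ * ‖u‖) ^ 2) x := by
    intro x
    set v := a + x • b with hv
    have hnv : (0:ℝ) < ‖v‖ := norm_pos_iff.mpr (hne x)
    have hline : HasDerivAt (fun t : ℝ => a + t • b) b x := by
      simpa using ((hasDerivAt_id x).smul_const b).const_add a
    have hg : HasDerivAt (fun t : ℝ => ⟪a + t • b, u⟫) ⟪b, u⟫ x := by
      simpa using HasDerivAt.inner ℝ hline (hasDerivAt_const x u)
    have hq : HasDerivAt (fun t : ℝ => ⟪a + t • b, a + t • b⟫) (2 * ⟪v, b⟫) x := by
      have := HasDerivAt.inner ℝ hline hline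
      simpa [← hv, real_inner_comm, two_mul] using this
    have hvv : ⟪v, v⟫ = ‖v‖ ^ 2 := real_inner_self_eq_norm_sq v
    have hvv0 : ⟪v, v⟫ ≠ 0 := by rw [hvv]; positivity
    have hn : HasDerivAt (fun t : ℝ => ‖a + t • b‖) (⟪v, b⟫ / ‖v‖) x := by
      have hcomp := (Real.hasDerivAt_sqrt hvv0).comp x hq
      have heqfun : (Real.sqrt ∘ fun t : ℝ => ⟪a + t • b, a + t • b⟫)
          = fun t : ℝ => ‖a + t • b‖ := by
        funext t
        simp only [Function.comp_apply, real_inner_self_eq_norm_sq]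
        exact Real.sqrt_sq (norm_nonneg _)
      rw [heqfun] at hcomp
      convert hcomp using 1
      case e'_4 => rfl
      case e'_5 => rfl
      rw [hvv, Real.sqrt_sq (norm_nonneg v)]
      field_simp
    have hden : HasDerivAt (fun t : ℝ => ‖a + t • b‖ * ‖u‖) (⟪v, b⟫ / ‖v‖ * ‖u‖) x :=
      hn.mul_const ‖u‖
    have hden0 : ‖v‖ * ‖u‖ ≠ 0 := by positivity
    have hdiv := hg.div hden hden0
    have huv : u = v + (y - x) • b := by rw [hu, hv]; module
    have e1 : ⟪b, u⟫ = ⟪b, v⟫ + (y - x) * ‖b‖ ^ 2 := by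
      rw [huv, inner_add_right, real_inner_smul_right, real_inner_self_eq_norm_sq]
    have e2 : ⟪v, u⟫ = ‖v‖ ^ 2 + (y - x) * ⟪v, b⟫ := by
      rw [huv, inner_add_right, real_inner_smul_right, real_inner_self_eq_norm_sq]
    have hcomm : ⟪b, v⟫ = ⟪v, b⟫ := real_inner_comm v b
    convert hdiv using 1
    case e'_4 => rfl
    case e'_5 => rfl
    case e'_8 => rfl
    rw [e1, e2, hcomm]
    have hnv' : ‖v‖ ≠ 0 := ne_of_gt hnv
    simp only [← hv]
    field_simp
    ring
  -- f is within [-1, 1]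
  have hfb : ∀ x : ℝ, f x ∈ Set.Icc (-1:ℝ) 1 := by
    intro x
    have h1 := abs_real_inner_le_norm (a + x • b) u
    have h2 : (0:ℝ) < ‖a + x • b‖ * ‖u‖ := mul_pos (norm_pos_iff.mpr (hne x)) hnu
    obtain ⟨hl, hr⟩ := abs_le.mp h1
    exact ⟨by rw [hf]; dsimp only; rw [le_div_iff₀ h2]; linarith,
      by rw [hf]; dsimp only; rw [div_le_one h2]; linarith⟩
  have hgap' : ∀ x : ℝ, 0 < ‖b‖ ^ 2 * ‖a + x • b‖ ^ 2 - ⟪a + x • b, b⟫ ^ 2 := by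
    intro x
    have := gap x
    nlinarith
  have hcont : Continuous f := by
    have hd : Differentiable ℝ f := fun x => (hderiv x).differentiableAt
    exact hd.continuous
  have hang : ∀ x : ℝ, angle (a + x • b) u = Real.arccos (f x) := fun x => rfl
  have hmono : StrictMonoOn f (Set.Iic y) := by
    apply strictMonoOn_of_deriv_pos (convex_Iic y) hcont.continuousOn
    intro x hx
    rw [interior_Iic] at hx
    rw [(hderiv x).deriv]
    apply div_pos
    · exact mul_pos (div_pos hnu (norm_pos_iff.mpr (hne x)))
        (mul_pos (sub_pos.mpr hx) (hgap' x))
    · exact pow_pos (mul_pos (norm_pos_iff.mpr (hne x)) hnu) 2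
  have hanti : StrictAntiOn f (Set.Ici y) := by
    apply strictAntiOn_of_deriv_neg (convex_Ici y) hcont.continuousOn
    intro x hx
    rw [interior_Ici] at hx
    have hx' : y < x := hx
    rw [(hderiv x).deriv]
    apply div_neg_of_neg_of_pos
    · have h1 : y - x < 0 := by linarith
      have := hgap' x
      have h2 : (y - x) * (‖b‖ ^ 2 * ‖a + x • b‖ ^ 2 - ⟪a + x • b, b⟫ ^ 2) < 0 :=
        mul_neg_of_neg_of_pos h1 this
      exact mul_neg_of_pos_of_neg (div_pos hnu (norm_pos_iff.mpr (hne x))) h2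
    · exact pow_pos (mul_pos (norm_pos_iff.mpr (hne x)) hnu) 2
  constructor
  · intro x₁ x₂ hlt hle
    rw [hang, hang]
    exact strictAntiOn_arccos (hfb x₁) (hfb x₂)
      (hmono (le_of_lt (lt_of_lt_of_le hlt hle)) hle hlt)
  · intro x₁ x₂ hle hlt
    rw [hang, hang]
    exact strictAntiOn_arccos (hfb x₂) (hfb x₁)
      (hanti hle (le_of_lt (lt_of_le_of_lt hle hlt)) hlt)
end

section
/- Let E be a real inner product space and let a, b ∈ E be linearly independent. Then for all x, y ∈ [0, ∞), ∠(a + x•b, a + y•b) ≤ max (∠(a, a + y•b)) (∠(b, a + y•b)). In other words, for a fixed point a + y•b of the cone {a + t•b : t ≥ 0}, the angle it makes with a + x•b is maximized at the endpoint x = 0 (i.e. at a) or in the limiting direction b. -/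
open InnerProductGeometry RealInnerProductSpace

private lemma sq_le_of_nonneg {p q : ℝ} (hp : 0 ≤ p) (hq : 0 ≤ q) (h : p ^ 2 ≤ q ^ 2) :
    p ≤ q := by
  nlinarith

private lemma sq_le_of_nonpos {p q : ℝ} (hp : p ≤ 0) (hq : q ≤ 0) (h : q ^ 2 ≤ p ^ 2) :
    p ≤ q := by
  nlinarith

private lemma arccos_le_arccos' {s t : ℝ} (h : s ≤ t) : Real.arccos t ≤ Real.arccos s := by
  simp only [Real.arccos]
  have := Real.monotone_arcsin h
  linarith

/-- key algebraic lemma for the case `x ≤ y`. -/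
private lemma key1 {A B C x y : ℝ} (hA : 0 < A) (hd : C ^ 2 < A * B) (hx : 0 ≤ x)
    (hxy : x ≤ y) :
    (A + y * C) * Real.sqrt (A + 2 * x * C + x ^ 2 * B) ≤
      Real.sqrt A * (A + (x + y) * C + x * y * B) := by
  have hy : 0 ≤ y := le_trans hx hxy
  have hB : 0 < B := by nlinarith [sq_nonneg C]
  have hn2 : 0 < A + 2 * x * C + x ^ 2 * B := by nlinarith [sq_nonneg (x * B + C), hB, hd]
  have hw2 : 0 < A + 2 * y * C + y ^ 2 * B := by nlinarith [sq_nonneg (y * B + C), hB, hd]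
  set g0 : ℝ := A + y * C with hg0def
  set g : ℝ := A + (x + y) * C + x * y * B with hgdef
  have hsA : Real.sqrt A ^ 2 = A := Real.sq_sqrt hA.le
  have hsn : Real.sqrt (A + 2 * x * C + x ^ 2 * B) ^ 2 = A + 2 * x * C + x ^ 2 * B :=
    Real.sq_sqrt hn2.le
  have hsA0 : 0 ≤ Real.sqrt A := Real.sqrt_nonneg _
  have hsn0 : 0 ≤ Real.sqrt (A + 2 * x * C + x ^ 2 * B) := Real.sqrt_nonneg _
  rcases le_or_gt 0 g with hg | hg
  · rcases le_or_gt g0 0 with hg0 | hg0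
    · calc g0 * Real.sqrt (A + 2 * x * C + x ^ 2 * B) ≤ 0 := mul_nonpos_of_nonpos_of_nonneg hg0 hsn0
        _ ≤ Real.sqrt A * g := mul_nonneg hsA0 hg
    · -- both nonneg; compare squares
      apply sq_le_of_nonneg (mul_nonneg hg0.le hsn0) (mul_nonneg hsA0 hg)
      have hD : A * g ^ 2 - g0 ^ 2 * (A + 2 * x * C + x ^ 2 * B) =
          (A * B - C ^ 2) * x * ((y - x) * g0 + y * g) := by
        simp only [hg0def, hgdef]; ring
      have hbr : 0 ≤ (y - x) * g0 + y * g :=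
        add_nonneg (mul_nonneg (by linarith) hg0.le) (mul_nonneg hy hg)
      have : 0 ≤ A * g ^ 2 - g0 ^ 2 * (A + 2 * x * C + x ^ 2 * B) := by
        rw [hD]
        exact mul_nonneg (mul_nonneg (by nlinarith) hx) hbr
      nlinarith
  · -- g < 0 : then g0 < 0 as well
    have hg0 : g0 < 0 := by
      by_contra hcon
      push_neg at hcon
      rcases le_or_gt 0 (C + y * B) with hgb | hgb
      · nlinarith
      · nlinarith
    apply sq_le_of_nonpos (mul_nonpos_of_nonpos_of_nonneg hg0.le hsn0)
      (mul_nonpos_of_nonneg_of_nonpos hsA0 hg.le)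
    have hD : A * g ^ 2 - g0 ^ 2 * (A + 2 * x * C + x ^ 2 * B) =
        (A * B - C ^ 2) * x * ((y - x) * g0 + y * g) := by
      simp only [hg0def, hgdef]; ring
    have hbr : (y - x) * g0 + y * g ≤ 0 := by
      have h1 : (y - x) * g0 ≤ 0 := mul_nonpos_of_nonneg_of_nonpos (by linarith) hg0.le
      have h2 : y * g ≤ 0 := mul_nonpos_of_nonneg_of_nonpos hy hg.le
      linarith
    have : A * g ^ 2 - g0 ^ 2 * (A + 2 * x * C + x ^ 2 * B) ≤ 0 := by
      rw [hD]
      exact mul_nonpos_of_nonneg_of_nonpos (mul_nonneg (by nlinarith) hx) hbr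
    nlinarith

/-- key algebraic lemma for the case `y ≤ x`. -/
private lemma key2 {A B C x y : ℝ} (hA : 0 < A) (hd : C ^ 2 < A * B) (hy : 0 ≤ y)
    (hxy : y ≤ x) :
    (C + y * B) * Real.sqrt (A + 2 * x * C + x ^ 2 * B) ≤
      Real.sqrt B * (A + (x + y) * C + x * y * B) := by
  have hx : 0 ≤ x := le_trans hy hxy
  have hB : 0 < B := by nlinarith [sq_nonneg C]
  have hn2 : 0 < A + 2 * x * C + x ^ 2 * B := by nlinarith [sq_nonneg (x * B + C), hB, hd]
  have hw2 : 0 < A + 2 * y * C + y ^ 2 * B := by nlinarith [sq_nonneg (y * B + C), hB, hd]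
  set gb : ℝ := C + y * B with hgbdef
  set g : ℝ := A + (x + y) * C + x * y * B with hgdef
  have hsB : Real.sqrt B ^ 2 = B := Real.sq_sqrt hB.le
  have hsn : Real.sqrt (A + 2 * x * C + x ^ 2 * B) ^ 2 = A + 2 * x * C + x ^ 2 * B :=
    Real.sq_sqrt hn2.le
  have hsB0 : 0 ≤ Real.sqrt B := Real.sqrt_nonneg _
  have hsn0 : 0 ≤ Real.sqrt (A + 2 * x * C + x ^ 2 * B) := Real.sqrt_nonneg _
  rcases le_or_gt 0 g with hg | hg
  · rcases le_or_gt gb 0 with hgb | hgb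
    · calc gb * Real.sqrt (A + 2 * x * C + x ^ 2 * B) ≤ 0 := mul_nonpos_of_nonpos_of_nonneg hgb hsn0
        _ ≤ Real.sqrt B * g := mul_nonneg hsB0 hg
    · apply sq_le_of_nonneg (mul_nonneg hgb.le hsn0) (mul_nonneg hsB0 hg)
      have hD : B * g ^ 2 - gb ^ 2 * (A + 2 * x * C + x ^ 2 * B) =
          (A * B - C ^ 2) * ((x - y) * gb + g) := by
        simp only [hgbdef, hgdef]; ring
      have hbr : 0 ≤ (x - y) * gb + g :=
        add_nonneg (mul_nonneg (by linarith) hgb.le) hg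
      have : 0 ≤ B * g ^ 2 - gb ^ 2 * (A + 2 * x * C + x ^ 2 * B) := by
        rw [hD]; exact mul_nonneg (by nlinarith) hbr
      nlinarith
  · have hgb : gb < 0 := by
      by_contra hcon
      push_neg at hcon
      -- g = (A + y*C) + x * gb ≥ (A + y*C) + y * gb = ‖a + y b‖² > 0
      nlinarith [mul_le_mul_of_nonneg_right hxy hcon]
    apply sq_le_of_nonpos (mul_nonpos_of_nonpos_of_nonneg hgb.le hsn0)
      (mul_nonpos_of_nonneg_of_nonpos hsB0 hg.le)
    have hD : B * g ^ 2 - gb ^ 2 * (A + 2 * x * C + x ^ 2 * B) =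
        (A * B - C ^ 2) * ((x - y) * gb + g) := by
      simp only [hgbdef, hgdef]; ring
    have hbr : (x - y) * gb + g ≤ 0 := by
      have h1 : (x - y) * gb ≤ 0 := mul_nonpos_of_nonneg_of_nonpos (by linarith) hgb.le
      linarith
    have : B * g ^ 2 - gb ^ 2 * (A + 2 * x * C + x ^ 2 * B) ≤ 0 := by
      rw [hD]; exact mul_nonpos_of_nonneg_of_nonpos (by nlinarith) hbr
    nlinarith

theorem angle_le_max_endpoints_on_ray {E : Type*} [NormedAddCommGroup E] [InnerProductSpace ℝ E]
    {a b : E} (h : LinearIndependent ℝ ![a, b]) :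
    ∀ x y : ℝ, 0 ≤ x → 0 ≤ y →
      angle (a + x • b) (a + y • b) ≤ max (angle a (a + y • b)) (angle b (a + y • b)) := by
  intro x y hx hy
  rw [linearIndependent_fin2] at h
  simp only [Matrix.cons_val_one, Matrix.head_cons, Matrix.cons_val_zero] at h
  obtain ⟨hb, hab⟩ := h
  have ha : a ≠ 0 := fun hc => hab 0 (by simp [hc])
  have hzne : ∀ t : ℝ, a + t • b ≠ 0 := by
    intro t hc
    exact hab (-t) (by rw [neg_smul, neg_eq_iff_add_eq_zero, add_comm]; exact hc)
  set A : ℝ := ⟪a, a⟫ with hAdef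
  set B : ℝ := ⟪b, b⟫ with hBdef
  set C : ℝ := ⟪a, b⟫ with hCdef
  have hA : 0 < A := by
    rw [hAdef, real_inner_self_eq_norm_sq]
    exact pow_pos (norm_pos_iff.mpr ha) 2
  have hB : 0 < B := by
    rw [hBdef, real_inner_self_eq_norm_sq]
    exact pow_pos (norm_pos_iff.mpr hb) 2
  have hd : C ^ 2 < A * B := by
    have hb' : (‖b‖ : ℝ) ≠ 0 := norm_ne_zero_iff.mpr hb
    have key : ∀ r : ℝ, ‖b‖ • a ≠ r • b := by
      intro r hc
      have := congrArg (fun v : E => (‖b‖⁻¹ : ℝ) • v) hc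
      simp only [smul_smul, inv_mul_cancel₀ hb', one_smul] at this
      exact hab (‖b‖⁻¹ * r) this.symm
    have h1 : C < ‖a‖ * ‖b‖ := inner_lt_norm_mul_iff_real.mpr (key ‖a‖)
    have h2 : ⟪(-a : E), b⟫ < ‖(-a : E)‖ * ‖b‖ := by
      refine inner_lt_norm_mul_iff_real.mpr ?_
      rw [smul_neg, norm_neg]
      intro hc
      exact key (-‖a‖) (by rw [neg_smul, ← hc, neg_neg])
    rw [inner_neg_left, norm_neg] at h2
    have hAB : A * B = (‖a‖ * ‖b‖) ^ 2 := by
      rw [hAdef, hBdef, real_inner_self_eq_norm_sq, real_inner_self_eq_norm_sq]; ring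
    nlinarith [mul_pos (norm_pos_iff.mpr ha) (norm_pos_iff.mpr hb)]
  have hinner : ∀ s t : ℝ, ⟪a + s • b, a + t • b⟫ = A + (s + t) * C + s * t * B := by
    intro s t
    simp only [inner_add_left, inner_add_right, real_inner_smul_left, real_inner_smul_right,
      hAdef, hBdef, hCdef, real_inner_comm b a]
    ring
  have hnorm : ∀ t : ℝ, ‖a + t • b‖ = Real.sqrt (A + 2 * t * C + t ^ 2 * B) := by
    intro t
    rw [norm_eq_sqrt_real_inner, hinner]
    ring_nf
  have hnormpos : ∀ t : ℝ, (0 : ℝ) < ‖a + t • b‖ := fun t => norm_pos_iff.mpr (hzne t)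
  have hna : ‖a‖ = Real.sqrt A := by rw [norm_eq_sqrt_real_inner]
  have hnb : ‖b‖ = Real.sqrt B := by rw [norm_eq_sqrt_real_inner]
  have hinnera : ⟪a, a + y • b⟫ = A + y * C := by
    simp only [inner_add_right, real_inner_smul_right, hAdef, hCdef]
  have hinnerb : ⟪b, a + y • b⟫ = C + y * B := by
    simp only [inner_add_right, real_inner_smul_right, hBdef, hCdef, real_inner_comm b a]
  rcases le_total x y with hxy | hxy
  · -- angle (a + x b) (a + y b) ≤ angle a (a + y b)
    refine le_trans ?_ (le_max_left _ _)
    unfold InnerProductGeometry.angle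
    apply arccos_le_arccos'
    rw [div_le_div_iff₀ (mul_pos (norm_pos_iff.mpr ha) (hnormpos y))
      (mul_pos (hnormpos x) (hnormpos y))]
    have key := key1 hA hd hx hxy
    rw [hinnera, hinner, hnorm, hna]
    have hw := (hnormpos y).le
    calc (A + y * C) * (Real.sqrt (A + 2 * x * C + x ^ 2 * B) * ‖a + y • b‖)
        = ((A + y * C) * Real.sqrt (A + 2 * x * C + x ^ 2 * B)) * ‖a + y • b‖ := by ring
      _ ≤ (Real.sqrt A * (A + (x + y) * C + x * y * B)) * ‖a + y • b‖ :=
          mul_le_mul_of_nonneg_right key hw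
      _ = (A + (x + y) * C + x * y * B) * (Real.sqrt A * ‖a + y • b‖) := by ring
  · -- angle (a + x b) (a + y b) ≤ angle b (a + y b)
    refine le_trans ?_ (le_max_right _ _)
    unfold InnerProductGeometry.angle
    apply arccos_le_arccos'
    rw [div_le_div_iff₀ (mul_pos (norm_pos_iff.mpr hb) (hnormpos y))
      (mul_pos (hnormpos x) (hnormpos y))]
    have key := key2 hA hd hy hxy
    rw [hinnerb, hinner, hnorm, hnb]
    have hw := (hnormpos y).le
    calc (C + y * B) * (Real.sqrt (A + 2 * x * C + x ^ 2 * B) * ‖a + y • b‖)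
        = ((C + y * B) * Real.sqrt (A + 2 * x * C + x ^ 2 * B)) * ‖a + y • b‖ := by ring
      _ ≤ (Real.sqrt B * (A + (x + y) * C + x * y * B)) * ‖a + y • b‖ :=
          mul_le_mul_of_nonneg_right key hw
      _ = (A + (x + y) * C + x * y * B) * (Real.sqrt B * ‖a + y • b‖) := by ring
end

section
/- (Lemma 1 of the paper.) Let E be a real inner product space and let a, b ∈ E be such that the origin does not belong to the segment [a, b] (the convex hull of {a, b}). Then for all x, y ∈ [a, b], the angle ∠(x, y) between the position vectors x and y satisfies ∠(x, y) ≤ ∠(a, b). -/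
open InnerProductGeometry
open scoped RealInnerProductSpace

private lemma arccos_anti' {x y : ℝ} (h : x ≤ y) : Real.arccos y ≤ Real.arccos x := by
  simp only [Real.arccos_eq_pi_div_two_sub_arcsin]
  have := Real.monotone_arcsin h
  linarith

/-- Core inequality: for x on segment [a,b], ⟪a,b⟫‖x‖ ≤ ⟪x,b⟫‖a‖. -/
private lemma sq_le_imp' {X Y : ℝ} (hX : 0 ≤ X) (hY : 0 ≤ Y) (h : Y^2 ≤ X^2) : Y ≤ X := by
  nlinarith

private lemma cos_key {E : Type*} [NormedAddCommGroup E] [InnerProductSpace ℝ E]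
    {a b x : E} (hb : b ≠ 0)
    {s : ℝ} (hs0 : 0 ≤ s) (hs1 : s ≤ 1) (hxe : x = (1 - s) • a + s • b) :
    ⟪a, b⟫ * ‖x‖ ≤ ⟪x, b⟫ * ‖a‖ := by
  set C := ⟪a, b⟫ with hC
  have hna : (0:ℝ) ≤ ‖a‖ := norm_nonneg a
  have hnb : (0:ℝ) < ‖b‖ := norm_pos_iff.mpr hb
  have hnx : (0:ℝ) ≤ ‖x‖ := norm_nonneg x
  have hP : ⟪x, b⟫ = (1 - s) * C + s * ‖b‖^2 := by
    simp only [hxe, inner_add_left, real_inner_smul_left, real_inner_self_eq_norm_sq, hC]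
  have hq : ‖x‖^2 = (1-s)^2*‖a‖^2 + 2*(1-s)*s*C + s^2*‖b‖^2 := by
    have h0 : ‖x‖^2 = ⟪x, x⟫ := (real_inner_self_eq_norm_sq x).symm
    rw [h0, hxe, real_inner_add_add_self]
    simp only [real_inner_smul_left, real_inner_smul_right, real_inner_self_eq_norm_sq, ← hC,
      norm_smul, mul_pow, sq_abs, Real.norm_eq_abs]
    ring
  have hCS : |C| ≤ ‖a‖ * ‖b‖ := abs_real_inner_le_norm a b
  have hCS1 : C ≤ ‖a‖ * ‖b‖ := (le_abs_self C).trans hCS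
  have hCS2 : -(‖a‖ * ‖b‖) ≤ C := neg_le_of_abs_le hCS
  have hdisc : 0 ≤ ‖a‖^2 * ‖b‖^2 - C^2 := by nlinarith
  -- key identity
  have hid : (⟪x, b⟫)^2 * ‖a‖^2 - C^2 * ‖x‖^2
      = s * (‖a‖^2 * ‖b‖^2 - C^2) * (2*(1-s)*C + s*‖b‖^2) := by
    rw [hP, hq]; ring
  rcases le_or_gt C 0 with hCneg | hCpos
  · rcases le_or_gt 0 (⟪x, b⟫) with hPpos | hPneg
    · have h1 : C * ‖x‖ ≤ 0 := mul_nonpos_of_nonpos_of_nonneg hCneg hnx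
      have h2 : 0 ≤ ⟪x, b⟫ * ‖a‖ := mul_nonneg hPpos hna
      linarith
    · have h1 : (1-s)*C ≤ 0 := mul_nonpos_of_nonneg_of_nonpos (by linarith) hCneg
      have hfac : 2*(1-s)*C + s*‖b‖^2 ≤ 0 := by linarith [hP]
      have h2 : s * (‖a‖^2 * ‖b‖^2 - C^2) * (2*(1-s)*C + s*‖b‖^2) ≤ 0 :=
        mul_nonpos_of_nonneg_of_nonpos (mul_nonneg hs0 hdisc) hfac
      have hsq : (⟪x, b⟫)^2 * ‖a‖^2 ≤ C^2 * ‖x‖^2 := by linarith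
      have hX : 0 ≤ -(C * ‖x‖) := neg_nonneg.mpr (mul_nonpos_of_nonpos_of_nonneg hCneg hnx)
      have hY : 0 ≤ -(⟪x, b⟫ * ‖a‖) := neg_nonneg.mpr (mul_nonpos_of_nonpos_of_nonneg hPneg.le hna)
      have := sq_le_imp' hX hY (by rw [neg_sq, neg_sq, mul_pow, mul_pow]; linarith)
      linarith
  · have hPpos : 0 ≤ ⟪x, b⟫ := by
      rw [hP]
      have : 0 ≤ (1-s)*C := mul_nonneg (by linarith) hCpos.le
      nlinarith
    have hfac : 0 ≤ 2*(1-s)*C + s*‖b‖^2 := by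
      have h3 : 0 ≤ 2*(1-s)*C := mul_nonneg (by linarith) hCpos.le
      nlinarith
    have h2 : 0 ≤ s * (‖a‖^2 * ‖b‖^2 - C^2) * (2*(1-s)*C + s*‖b‖^2) :=
      mul_nonneg (mul_nonneg hs0 hdisc) hfac
    have hsq : C^2 * ‖x‖^2 ≤ (⟪x, b⟫)^2 * ‖a‖^2 := by linarith
    exact sq_le_imp' (mul_nonneg hPpos hna) (mul_nonneg hCpos.le hnx)
      (by rw [mul_pow, mul_pow]; linarith)

/-- point on segment: angle to endpoint b shrinks. -/
private lemma angle_key {E : Type*} [NormedAddCommGroup E] [InnerProductSpace ℝ E]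
    {a b x : E} (ha : a ≠ 0) (hb : b ≠ 0) (hx : x ≠ 0)
    {s : ℝ} (hs0 : 0 ≤ s) (hs1 : s ≤ 1) (hxe : x = (1 - s) • a + s • b) :
    angle x b ≤ angle a b := by
  have hna : (0:ℝ) < ‖a‖ := norm_pos_iff.mpr ha
  have hnb : (0:ℝ) < ‖b‖ := norm_pos_iff.mpr hb
  have hnx : (0:ℝ) < ‖x‖ := norm_pos_iff.mpr hx
  have key := cos_key hb hs0 hs1 hxe
  unfold angle
  apply arccos_anti'
  rw [div_le_div_iff₀ (by positivity) (by positivity)]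
  nlinarith [mul_le_mul_of_nonneg_right key hnb.le]

theorem angle_le_angle_of_mem_segment {E : Type*} [NormedAddCommGroup E] [InnerProductSpace ℝ E]
    {a b : E} (h : (0 : E) ∉ convexHull ℝ ({a, b} : Set E)) :
    ∀ x ∈ convexHull ℝ ({a, b} : Set E), ∀ y ∈ convexHull ℝ ({a, b} : Set E),
      angle x y ≤ angle a b := by
  rw [convexHull_pair] at h ⊢
  have hne : ∀ z ∈ segment ℝ a b, z ≠ 0 := fun z hz h0 => h (h0 ▸ hz)
  have ha : a ≠ 0 := hne a (left_mem_segment ℝ a b)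
  have hb : b ≠ 0 := hne b (right_mem_segment ℝ a b)
  -- main step for ordered parameters
  have main : ∀ s t : ℝ, 0 ≤ s → s ≤ 1 → 0 ≤ t → t ≤ 1 → s ≤ t →
      angle ((1-s)•a + s•b) ((1-t)•a + t•b) ≤ angle a b := by
    intro s t hs0 hs1 ht0 ht1 hst
    set x := (1-s)•a + s•b with hxe
    set y := (1-t)•a + t•b with hye
    have hxmem : x ∈ segment ℝ a b := by
      rw [segment_eq_image]; exact ⟨s, ⟨hs0, hs1⟩, rfl⟩
    have hymem : y ∈ segment ℝ a b := by
      rw [segment_eq_image]; exact ⟨t, ⟨ht0, ht1⟩, rfl⟩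
    have hx : x ≠ 0 := hne x hxmem
    have hy : y ≠ 0 := hne y hymem
    have step2 : angle x b ≤ angle a b := angle_key ha hb hx hs0 hs1 hxe
    rcases eq_or_lt_of_le hs1 with hs1' | hs1'
    · -- s = 1 : x = b, t = 1, y = b
      have ht1' : t = 1 := le_antisymm ht1 (hs1' ▸ hst)
      have hxb : x = b := by rw [hxe, hs1']; simp
      have hyb : y = b := by rw [hye, ht1']; simp
      rw [hxb, hyb, angle_self hb]
      exact angle_nonneg a b
    · -- s < 1, set r' := (1-t)/(1-s), y = (1-r')•b + r'•x
      have h1s : (1:ℝ) - s > 0 := by linarith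
      set r' := (1-t)/(1-s) with hr'
      have hr0 : 0 ≤ r' := div_nonneg (by linarith) h1s.le
      have hr1 : r' ≤ 1 := by
        rw [hr', div_le_one h1s]; linarith
      have e1 : r' * (1 - s) = 1 - t := by rw [hr']; field_simp
      have e2 : r' * s + (1 - r') = t := by
        have : r' * s = r' - (1 - t) := by
          have : r' * s = r' * 1 - r' * (1 - s) := by ring
          rw [this, e1]; ring
        rw [this]; ring
      have hyrep : y = (1 - r') • b + r' • x := by
        rw [hxe, hye, smul_add, smul_smul, smul_smul, e1]
        rw [add_comm ((1-r') • b), add_assoc, ← add_smul, e2]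
      have step1 : angle y x ≤ angle b x :=
        angle_key hb hx hy hr0 hr1 hyrep
      calc angle x y = angle y x := angle_comm x y
        _ ≤ angle b x := step1
        _ = angle x b := angle_comm b x
        _ ≤ angle a b := step2
  intro x hx y hy
  rw [segment_eq_image] at hx hy
  obtain ⟨s, ⟨hs0, hs1⟩, rfl⟩ := hx
  obtain ⟨t, ⟨ht0, ht1⟩, rfl⟩ := hy
  rcases le_total s t with hst | hst
  · exact main s t hs0 hs1 ht0 ht1 hst
  · rw [angle_comm]
    exact main t s ht0 ht1 hs0 hs1 hst
end
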